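/- Let R be a number ring (a subring of a number field), I an invertible ideal of R, and J any nonzero ideal of R. Then N(I)·N(J) = N(IJ), where N denotes the index in R. -/

import Mathlib

open scoped nonZeroDivisors

section Aux

variable {A : Type*} [CommRing A] [IsDomain A]

theorem aux_card_mul (I J : Ideal A)
    (hI : IsUnit (I : FractionalIdeal A⁰ (FractionRing A))) :
    Nat.card (A ⧸ I) * Nat.card (A ⧸ J) = Nat.card (A ⧸ (I * J)) := by
  classical
  set K' := FractionRing A
  -- dispose of infinite cases
  by_cases hfI : Finite (A ⧸ I)
  swap
  · have h1 : Nat.card (A ⧸ I) = 0 := by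
      have : Infinite (A ⧸ I) := not_finite_iff_infinite.mp hfI
      exact Nat.card_eq_zero_of_infinite
    have h2 : Nat.card (A ⧸ (I * J)) = 0 := by
      have hsurj : Function.Surjective (Ideal.Quotient.factor (S := I * J) (T := I) Ideal.mul_le_left) := by
        intro y
        obtain ⟨x, rfl⟩ := Ideal.Quotient.mk_surjective y
        exact ⟨Ideal.Quotient.mk _ x, Ideal.Quotient.factor_mk _ _⟩
      have : ¬ Finite (A ⧸ (I * J)) := fun h => hfI (Finite.of_surjective _ hsurj)
      have : Infinite (A ⧸ (I * J)) := not_finite_iff_infinite.mp this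
      exact Nat.card_eq_zero_of_infinite
    rw [h1, h2, zero_mul]
  by_cases hfJ : Finite (A ⧸ J)
  swap
  · have h1 : Nat.card (A ⧸ J) = 0 := by
      have : Infinite (A ⧸ J) := not_finite_iff_infinite.mp hfJ
      exact Nat.card_eq_zero_of_infinite
    have h2 : Nat.card (A ⧸ (I * J)) = 0 := by
      have hsurj : Function.Surjective (Ideal.Quotient.factor (S := I * J) (T := J) Ideal.mul_le_right) := by
        intro y
        obtain ⟨x, rfl⟩ := Ideal.Quotient.mk_surjective y
        exact ⟨Ideal.Quotient.mk _ x, Ideal.Quotient.factor_mk _ _⟩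
      have : ¬ Finite (A ⧸ (I * J)) := fun h => hfJ (Finite.of_surjective _ hsurj)
      have : Infinite (A ⧸ (I * J)) := not_finite_iff_infinite.mp this
      exact Nat.card_eq_zero_of_infinite
    rw [h1, h2, mul_zero]
  -- main case
  have inj : Function.Injective (algebraMap A K') := IsFractionRing.injective A K'
  -- the inverse fractional ideal
  set u := hI.unit with hu
  set S2 : Submodule A K' := ((↑u⁻¹ : FractionalIdeal A⁰ K') : Submodule A K') with hS2
  have hmul : ((I : FractionalIdeal A⁰ K') : Submodule A K') * S2 = 1 := by
    rw [hS2, ← FractionalIdeal.coe_mul]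
    have : (I : FractionalIdeal A⁰ K') * (↑u⁻¹ : FractionalIdeal A⁰ K') = 1 := by
      rw [← hI.unit_spec]
      exact u.mul_inv
    rw [this, FractionalIdeal.coe_one]
  -- representation of 1
  have hrep : ∃ (n : ℕ) (a : Fin n → A) (b : Fin n → K'),
      (∀ i, a i ∈ I) ∧ (∀ i, b i ∈ S2) ∧
      ∑ i, algebraMap A K' (a i) * b i = 1 := by
    have h1 : (1 : K') ∈ ((I : FractionalIdeal A⁰ K') : Submodule A K') * S2 := by
      rw [hmul]; exact Submodule.one_le.mp le_rfl
    refine Submodule.mul_induction_on h1 ?_ ?_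
    · intro m hm z hz
      rw [FractionalIdeal.mem_coe, FractionalIdeal.mem_coeIdeal] at hm
      obtain ⟨a, ha, rfl⟩ := hm
      exact ⟨1, fun _ => a, fun _ => z, fun _ => ha, fun _ => hz, by simp⟩
    · rintro x y ⟨n₁, a₁, b₁, ha₁, hb₁, hs₁⟩ ⟨n₂, a₂, b₂, ha₂, hb₂, hs₂⟩
      refine ⟨n₁ + n₂, Fin.append a₁ a₂, Fin.append b₁ b₂, ?_, ?_, ?_⟩
      · intro i
        refine Fin.addCases ?_ ?_ i
        · intro j; rw [Fin.append_left]; exact ha₁ j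
        · intro j; rw [Fin.append_right]; exact ha₂ j
      · intro i
        refine Fin.addCases ?_ ?_ i
        · intro j; rw [Fin.append_left]; exact hb₁ j
        · intro j; rw [Fin.append_right]; exact hb₂ j
      · rw [Fin.sum_univ_add]
        simp only [Fin.append_left, Fin.append_right]
        rw [hs₁, hs₂]
  obtain ⟨n, a, b, ha, hb, hsum⟩ := hrep
  -- the "dual basis" maps
  have hb2 : ∀ i, ∀ y ∈ I, ∃ r : A, algebraMap A K' r = b i * algebraMap A K' y := by
    intro i y hy
    have hyS : algebraMap A K' y ∈ ((I : FractionalIdeal A⁰ K') : Submodule A K') := by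
      rw [FractionalIdeal.mem_coe, FractionalIdeal.mem_coeIdeal]
      exact ⟨y, hy, rfl⟩
    have : b i * algebraMap A K' y ∈ S2 * ((I : FractionalIdeal A⁰ K') : Submodule A K') :=
      Submodule.mul_mem_mul (hb i) hyS
    rw [mul_comm, hmul] at this
    rw [Submodule.mem_one] at this
    obtain ⟨r, hr⟩ := this
    exact ⟨r, hr⟩
  set φ : Fin n → A → A := fun i y =>
    if h : ∃ r : A, algebraMap A K' r = b i * algebraMap A K' y then h.choose else 0 with hφ
  have spec : ∀ i, ∀ y ∈ I, algebraMap A K' (φ i y) = b i * algebraMap A K' y := by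
    intro i y hy
    have h := hb2 i y hy
    simp only [hφ, dif_pos h]
    exact h.choose_spec
  -- basic identities
  have one_rep : ∑ i, φ i (a i) = 1 := by
    apply inj
    rw [map_sum, map_one, ← hsum]
    exact Finset.sum_congr rfl fun i _ => by rw [spec i (a i) (ha i), mul_comm]
  have fact_symm : ∀ i, ∀ y ∈ I, ∀ z ∈ I, φ i y * z = y * φ i z := by
    intro i y hy z hz
    apply inj
    rw [map_mul, map_mul, spec i y hy, spec i z hz]
    ring
  have fact_smul : ∀ i, ∀ r : A, ∀ y ∈ I, φ i (r * y) = r * φ i y := by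
    intro i r y hy
    apply inj
    rw [spec i (r * y) (I.mul_mem_left r hy)]
    simp only [map_mul]
    rw [spec i y hy]
    ring
  have fact_add : ∀ i, ∀ y ∈ I, ∀ z ∈ I, φ i (y + z) = φ i y + φ i z := by
    intro i y hy z hz
    apply inj
    rw [spec i (y + z) (I.add_mem hy hz), map_add, map_add, spec i y hy, spec i z hz]
    ring
  have mem_J : ∀ i, ∀ w ∈ I * J, w ∈ I ∧ φ i w ∈ J := by
    intro i w hw
    refine Submodule.mul_induction_on hw ?_ ?_
    · intro y hy j hj
      constructor
      · exact I.mul_mem_right j hy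
      · rw [show y * j = j * y from mul_comm y j, fact_smul i j y hy]
        exact J.mul_mem_right _ hj
    · rintro w₁ w₂ ⟨hw₁I, hw₁⟩ ⟨hw₂I, hw₂⟩
      exact ⟨I.add_mem hw₁I hw₂I, by rw [fact_add i w₁ hw₁I w₂ hw₂I]; exact J.add_mem hw₁ hw₂⟩
  -- the set of maximal ideals containing J is finite
  set SetM : Set (Ideal A) := {m : Ideal A | m.IsMaximal ∧ J ≤ m} with hSetM
  have hMfin : SetM.Finite := by
    have hqfin : Finite (Ideal (A ⧸ J)) :=
      Finite.of_injective (fun m => (m : Set (A ⧸ J))) fun _ _ h => SetLike.coe_injective h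
    apply Set.Finite.of_finite_image (f := fun m : Ideal A => m.map (Ideal.Quotient.mk J))
    · exact Set.toFinite _
    · intro m₁ hm₁ m₂ hm₂ h
      dsimp only at h
      have e₁ : Ideal.comap (Ideal.Quotient.mk J) (Ideal.map (Ideal.Quotient.mk J) m₁) = m₁ := by
        rw [Ideal.comap_map_of_surjective _ Ideal.Quotient.mk_surjective, ← RingHom.ker_eq_comap_bot,
          Ideal.mk_ker, sup_eq_left.mpr hm₁.2]
      have e₂ : Ideal.comap (Ideal.Quotient.mk J) (Ideal.map (Ideal.Quotient.mk J) m₂) = m₂ := by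
        rw [Ideal.comap_map_of_surjective _ Ideal.Quotient.mk_surjective, ← RingHom.ker_eq_comap_bot,
          Ideal.mk_ker, sup_eq_left.mpr hm₂.2]
      rw [← e₁, ← e₂, h]
  haveI : Finite ↥SetM := hMfin.to_subtype
  letI : Fintype ↥SetM := Fintype.ofFinite _
  -- for each maximal m ⊇ J there is i with φ i (a i) ∉ m
  have hex : ∀ m : ↥SetM, ∃ i, φ i (a i) ∉ (m : Ideal A) := by
    intro m
    by_contra h
    push_neg at h
    have : (1 : A) ∈ (m : Ideal A) := by
      rw [← one_rep]; exact Submodule.sum_mem _ fun i _ => h i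
    exact m.2.1.ne_top ((Ideal.eq_top_iff_one _).mpr this)
  set ix : ↥SetM → Fin n := fun m => (hex m).choose with hix
  have hix_spec : ∀ m : ↥SetM, φ (ix m) (a (ix m)) ∉ (m : Ideal A) := fun m => (hex m).choose_spec
  -- CRT idempotents
  have hpair : Pairwise fun m₁ m₂ : ↥SetM => IsCoprime (m₁ : Ideal A) (m₂ : Ideal A) := by
    intro m₁ m₂ hne
    exact Ideal.isCoprime_iff_sup_eq.mpr
      (Ideal.IsMaximal.coprime_of_ne m₁.2.1 m₂.2.1 (fun h => hne (Subtype.ext h)))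
  have hcrt : ∀ m₀ : ↥SetM, ∃ e : A, ∀ m : ↥SetM,
      e - (if m = m₀ then 1 else 0) ∈ (m : Ideal A) :=
    fun m₀ => Ideal.exists_forall_sub_mem_ideal (I := fun m : ↥SetM => (m : Ideal A)) hpair
      (fun m => if m = m₀ then 1 else 0)
  choose e he using hcrt
  -- the element x
  set x : A := ∑ m : ↥SetM, e m * a (ix m) with hx
  have hxI : x ∈ I := Submodule.sum_mem _ fun m _ => I.mul_mem_left _ (ha (ix m))
  -- the key coprimality
  set C : Ideal A := Ideal.span (Set.range fun i => φ i x) with hC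
  have hCJ : C ⊔ J = ⊤ := by
    by_contra h
    obtain ⟨m, hm_max, hm_ge⟩ := Ideal.exists_le_maximal _ h
    have hmM : m ∈ SetM := ⟨hm_max, le_trans le_sup_right hm_ge⟩
    set M : ↥SetM := ⟨m, hmM⟩ with hM
    have hphix : φ (ix M) x ∈ m :=
      le_trans le_sup_left hm_ge (Ideal.subset_span ⟨ix M, rfl⟩)
    have hexpand : φ (ix M) x = ∑ m' : ↥SetM, e m' * φ (ix M) (a (ix m')) := by
      apply inj
      rw [spec _ x hxI, hx, map_sum, map_sum, Finset.mul_sum]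
      refine Finset.sum_congr rfl fun m' _ => ?_
      rw [map_mul, map_mul, spec _ (a (ix m')) (ha (ix m'))]
      ring
    have hcollapse : Ideal.Quotient.mk m (φ (ix M) x) = Ideal.Quotient.mk m (φ (ix M) (a (ix M))) := by
      rw [hexpand, map_sum]
      rw [Finset.sum_eq_single M]
      · have h1 : Ideal.Quotient.mk m (e M) = 1 := by
          have := he M M
          simp only [if_pos rfl] at this
          rwa [← sub_eq_zero, ← map_one (Ideal.Quotient.mk m), ← map_sub,
            Ideal.Quotient.eq_zero_iff_mem]
        rw [map_mul, h1, one_mul]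
      · intro m' _ hne
        have : e m' ∈ m := by
          have h2 := he m' M
          rw [if_neg (fun hh => hne hh.symm), sub_zero] at h2
          exact h2
        rw [map_mul, Ideal.Quotient.eq_zero_iff_mem.mpr this, zero_mul]
      · intro h'; exact absurd (Finset.mem_univ M) h'
    rw [Ideal.Quotient.eq_zero_iff_mem.mpr hphix] at hcollapse
    exact hix_spec M (Ideal.Quotient.eq_zero_iff_mem.mp hcollapse.symm)
  -- consequences of coprimality
  have hIC : ∀ y ∈ I, ∀ c ∈ C, y * c ∈ Ideal.span {x} := by
    intro y hy c hc
    induction hc using Submodule.span_induction with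
    | mem z hz =>
      obtain ⟨i, rfl⟩ := hz
      rw [← fact_symm i y hy x hxI]
      exact Ideal.mem_span_singleton'.mpr ⟨φ i y, rfl⟩
    | zero => rw [mul_zero]; exact zero_mem _
    | add z w _ _ hz hw => rw [mul_add]; exact add_mem hz hw
    | smul r z _ hz =>
      rw [smul_eq_mul, show y * (r * z) = r * (y * z) by ring]
      exact Ideal.mul_mem_left _ r hz
  have hkey : I ≤ Ideal.span {x} ⊔ I * J := by
    conv_lhs => rw [← Ideal.mul_top I, ← hCJ]
    rw [Ideal.mul_sup]
    exact sup_le_sup_right (Ideal.mul_le.mpr hIC) _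
  have hker : ∀ r : A, r * x ∈ I * J → r ∈ J := by
    intro r hrx
    have hrC : ∀ c ∈ C, r * c ∈ J := by
      intro c hc
      induction hc using Submodule.span_induction with
      | mem z hz =>
        obtain ⟨i, rfl⟩ := hz
        rw [← fact_smul i r x hxI]
        exact (mem_J i _ hrx).2
      | zero => rw [mul_zero]; exact zero_mem _
      | add z w _ _ hz hw => rw [mul_add]; exact add_mem hz hw
      | smul s z _ hz =>
        rw [smul_eq_mul, show r * (s * z) = s * (r * z) by ring]
        exact Ideal.mul_mem_left _ s hz
    have h1 : (1 : A) ∈ C ⊔ J := by rw [hCJ]; exact Submodule.mem_top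
    obtain ⟨c, hc, j, hj, hcj⟩ := Submodule.mem_sup.mp h1
    have : r = r * c + r * j := by rw [← mul_add, hcj, mul_one]
    rw [this]
    exact J.add_mem (hrC c hc) (J.mul_mem_left r hj)
  -- the counting
  have hle : I * J ≤ I := Ideal.mul_le_left
  have hcount := Submodule.card_quotient_mul_card_quotient I (I * J) hle
  set f : A →ₗ[A] A ⧸ (I * J : Ideal A) :=
    LinearMap.toSpanSingleton A _ (Submodule.Quotient.mk x) with hf
  have hmk : ∀ r : A, f r = Submodule.Quotient.mk (r * x) := by
    intro r
    rw [hf, LinearMap.toSpanSingleton_apply, ← Submodule.Quotient.mk_smul, smul_eq_mul]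
  have hkerf : LinearMap.ker f = (J : Submodule A A) := by
    ext r
    rw [LinearMap.mem_ker, hmk, Submodule.Quotient.mk_eq_zero]
    constructor
    · exact hker r
    · intro hr
      rw [show r * x = x * r from mul_comm r x]
      exact Ideal.mul_mem_mul hxI hr
  have hrangef : LinearMap.range f = Submodule.map (I * J : Ideal A).mkQ I := by
    rw [hf, ← LinearMap.span_singleton_eq_range]
    apply le_antisymm
    · rw [Submodule.span_le, Set.singleton_subset_iff]
      exact ⟨x, hxI, rfl⟩
    · rintro _ ⟨y, hy, rfl⟩
      obtain ⟨s, hs, w, hw, hsw⟩ := Submodule.mem_sup.mp (hkey hy)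
      obtain ⟨t, ht⟩ := Ideal.mem_span_singleton'.mp hs
      rw [Submodule.mkQ_apply, ← hsw]
      rw [Submodule.Quotient.mk_add, (Submodule.Quotient.mk_eq_zero _).mpr hw, add_zero]
      exact Submodule.mem_span_singleton.mpr
        ⟨t, by rw [← Submodule.Quotient.mk_smul, smul_eq_mul, ht]⟩
  have hcardJ : Nat.card (A ⧸ J) = Nat.card (Submodule.map (I * J : Ideal A).mkQ I) := by
    have equiv1 : (A ⧸ LinearMap.ker f) ≃ₗ[A] LinearMap.range f := f.quotKerEquivRange
    rw [hkerf, hrangef] at equiv1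
    exact Nat.card_congr equiv1.toEquiv
  rw [← hcount, hcardJ, mul_comm]

end Aux

set_option synthInstance.maxHeartbeats 1000000 in

/-- In a number ring `R` (a subring of a number field), if `I` is an invertible ideal and `J`
any nonzero ideal, then `N(I)·N(J) = N(IJ)`. -/
theorem stmt3 (K : Type*) [Field K] [NumberField K] (R : Subring K)
    (I J : Ideal ↥R) (hJ : J ≠ ⊥)
    (hI : IsUnit (I : FractionalIdeal (nonZeroDivisors ↥R) (FractionRing ↥R))) :
    Nat.card (↥R ⧸ I) * Nat.card (↥R ⧸ J) = Nat.card (↥R ⧸ (I * J)) := by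
  exact aux_card_mul I J hI
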